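/- Let Ω be a real 3×3 matrix with Ωᵀ = −Ω, let g ∈ ℝ³ with Euclidean norm ‖g‖ = 1 and Ω·g ≠ 0, and let r, c > 0. Then there exists ε₀ > 0 such that for every ε with 0 < ε < ε₀, writing R(ε) = exp(ε·Ω) (matrix exponential), one has ⟪g, R(ε)·g⟫ < 1 and ‖r·(R(ε)·g) + c·g‖ < r + c (Euclidean inner product and norm on ℝ³). -/

import Mathlib

open Matrix
open scoped RealInnerProductSpace

/-- Moving a matrix across a dot product. -/
private lemma dot_mulVec_move (A : Matrix (Fin 3) (Fin 3) ℝ) (x y : Fin 3 → ℝ) :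
    (A.mulVec x) ⬝ᵥ y = x ⬝ᵥ (Aᵀ.mulVec y) := by
  rw [dotProduct_comm, Matrix.dotProduct_mulVec, ← Matrix.mulVec_transpose,
    dotProduct_comm]

private lemma inner_symm_eq_dot (u w : Fin 3 → ℝ) :
    ⟪(WithLp.equiv 2 (Fin 3 → ℝ)).symm u, (WithLp.equiv 2 (Fin 3 → ℝ)).symm w⟫ = u ⬝ᵥ w := by
  simp [PiLp.inner_apply, RCLike.inner_apply, dotProduct, mul_comm]

/-- Perturbation argument showing instability of the undesired set point in
Lemma 2: for a skew-symmetric `Ω` with `Ω g ≠ 0`, `‖g‖ = 1` and `r, c > 0`,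
small rotations `R(ε) = exp(ε Ω)` satisfy `⟪g, R(ε) g⟫ < 1` and
`‖r R(ε) g + c g‖ < r + c`. -/
theorem instability_perturbation
    (Ω : Matrix (Fin 3) (Fin 3) ℝ) (hΩ : Ωᵀ = -Ω)
    (g : EuclideanSpace ℝ (Fin 3)) (hg : ‖g‖ = 1)
    (hΩg : Ω.mulVec (WithLp.equiv 2 (Fin 3 → ℝ) g) ≠ 0)
    (r c : ℝ) (hr : 0 < r) (hc : 0 < c) :
    ∃ ε₀ > (0:ℝ), ∀ ε, 0 < ε → ε < ε₀ →
      ⟪g, (WithLp.equiv 2 (Fin 3 → ℝ)).symm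
          ((NormedSpace.exp (ε • Ω)).mulVec (WithLp.equiv 2 (Fin 3 → ℝ) g))⟫ < 1 ∧
      ‖r • ((WithLp.equiv 2 (Fin 3 → ℝ)).symm
          ((NormedSpace.exp (ε • Ω)).mulVec (WithLp.equiv 2 (Fin 3 → ℝ) g)))
        + c • g‖ < r + c := by
  classical
  set v : Fin 3 → ℝ := WithLp.equiv 2 (Fin 3 → ℝ) g with hv
  set a : Fin 3 → ℝ := Ω.mulVec v with ha
  have hgsymm : (WithLp.equiv 2 (Fin 3 → ℝ)).symm v = g := by simp [hv]
  -- skew-symmetry gives `a ⬝ᵥ v = 0`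
  have hav : a ⬝ᵥ v = 0 := by
    have h1 : a ⬝ᵥ v = v ⬝ᵥ (Ωᵀ.mulVec v) := dot_mulVec_move Ω v v
    have h2 : v ⬝ᵥ (Ωᵀ.mulVec v) = -(v ⬝ᵥ (Ω.mulVec v)) := by
      rw [hΩ, Matrix.neg_mulVec, dotProduct_neg]
    have h3 : v ⬝ᵥ (Ω.mulVec v) = a ⬝ᵥ v := dotProduct_comm v a
    linarith
  have haa : 0 < a ⬝ᵥ a := by
    have hnonneg : 0 ≤ a ⬝ᵥ a := Finset.sum_nonneg fun i _ => mul_self_nonneg _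
    rcases hnonneg.lt_or_eq with h | h
    · exact h
    · exact absurd (dotProduct_self_eq_zero.mp h.symm) hΩg
  have hvv : v ⬝ᵥ v = 1 := by
    have := real_inner_self_eq_norm_sq g
    rw [hg] at this
    have h2 : ⟪g, g⟫ = v ⬝ᵥ v := by rw [← hgsymm]; exact inner_symm_eq_dot v v
    nlinarith
  -- norm instances for the matrix exponential derivative
  letI : NormedRing (Matrix (Fin 3) (Fin 3) ℝ) := Matrix.linftyOpNormedRing
  letI : NormedAlgebra ℝ (Matrix (Fin 3) (Fin 3) ℝ) := Matrix.linftyOpNormedAlgebra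
  letI : CompleteSpace (Matrix (Fin 3) (Fin 3) ℝ) := FiniteDimensional.complete ℝ _
  -- the linear functional `M ↦ a ⬝ᵥ M v`
  let Llin : Matrix (Fin 3) (Fin 3) ℝ →ₗ[ℝ] ℝ :=
    { toFun := fun M => a ⬝ᵥ M.mulVec v
      map_add' := by intro M N; simp [Matrix.add_mulVec, dotProduct_add]
      map_smul' := by intro t M; simp [Matrix.smul_mulVec] }
  let L : Matrix (Fin 3) (Fin 3) ℝ →L[ℝ] ℝ := ⟨Llin, Llin.continuous_of_finiteDimensional⟩
  set φ : ℝ → ℝ := fun t => a ⬝ᵥ (NormedSpace.exp (t • Ω)).mulVec v with hφdef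
  have hφ0 : φ 0 = 0 := by
    show a ⬝ᵥ (NormedSpace.exp ((0:ℝ) • Ω)).mulVec v = 0
    rw [zero_smul, NormedSpace.exp_zero, Matrix.one_mulVec, hav]
  have hexp : HasDerivAt (fun t : ℝ => NormedSpace.exp (t • Ω))
      (NormedSpace.exp ((0:ℝ) • Ω) * Ω) 0 := hasDerivAt_exp_smul_const Ω (0:ℝ)
  have hD : NormedSpace.exp ((0:ℝ) • Ω) * Ω = Ω := by
    rw [zero_smul, NormedSpace.exp_zero, one_mul]
  rw [hD] at hexp
  have hφderiv : HasDerivAt φ (a ⬝ᵥ a) 0 := by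
    have := (L.hasFDerivAt (x := NormedSpace.exp ((0:ℝ) • Ω))).comp_hasDerivAt 0 hexp
    exact this
  -- positivity of φ near 0⁺
  have hslope : Filter.Tendsto (slope φ 0) (nhdsWithin 0 {(0:ℝ)}ᶜ) (nhds (a ⬝ᵥ a)) :=
    hasDerivAt_iff_tendsto_slope.mp hφderiv
  have hslope' : Filter.Tendsto (slope φ 0) (nhdsWithin 0 (Set.Ioi 0)) (nhds (a ⬝ᵥ a)) :=
    hslope.mono_left (nhdsWithin_mono _ (fun x hx => ne_of_gt hx))
  have hev : ∀ᶠ t in nhdsWithin 0 (Set.Ioi 0), 0 < slope φ 0 t :=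
    hslope'.eventually (eventually_gt_nhds haa)
  rcases Metric.mem_nhdsWithin_iff.mp hev with ⟨ε₀, hε₀, hball⟩
  refine ⟨ε₀, hε₀, fun ε hε hεlt => ?_⟩
  have hεmem : ε ∈ Metric.ball (0:ℝ) ε₀ ∩ Set.Ioi 0 := by
    constructor
    · simpa [Real.dist_eq, abs_of_pos hε] using hεlt
    · exact hε
  have hφpos : 0 < φ ε := by
    have hs : 0 < slope φ 0 ε := hball hεmem
    rw [slope_def_field, hφ0, sub_zero, sub_zero] at hs
    rcases div_pos_iff.mp hs with ⟨h1, _⟩ | ⟨_, h2⟩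
    · exact h1
    · linarith
  set M := NormedSpace.exp (ε • Ω) with hM
  set u : Fin 3 → ℝ := M.mulVec v with hu
  -- orthogonality of `M`
  have htr : Mᵀ = NormedSpace.exp (-(ε • Ω)) := by
    rw [hM, ← Matrix.exp_transpose]
    congr 1
    rw [Matrix.transpose_smul, hΩ, smul_neg]
  have hMortho : Mᵀ * M = 1 := by
    rw [htr, hM, ← Matrix.exp_add_of_commute (-(ε • Ω)) (ε • Ω)
      ((Commute.refl (ε • Ω)).neg_left), neg_add_cancel, NormedSpace.exp_zero]
  have huu : u ⬝ᵥ u = 1 := by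
    calc u ⬝ᵥ u = v ⬝ᵥ (Mᵀ.mulVec (M.mulVec v)) := dot_mulVec_move M v u
    _ = v ⬝ᵥ ((Mᵀ * M).mulVec v) := by rw [Matrix.mulVec_mulVec]
    _ = 1 := by rw [hMortho, Matrix.one_mulVec, hvv]
  -- `u ≠ v` since `φ ε > 0` but `a ⬝ᵥ v = 0`
  have hune : u ≠ v := by
    intro h
    have : φ ε = a ⬝ᵥ v := by rw [hφdef]; simp only [← hM, ← hu, h]
    rw [hav] at this
    exact absurd this (ne_of_gt hφpos)
  set Rg := (WithLp.equiv 2 (Fin 3 → ℝ)).symm u with hRg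
  have hRgnorm : ‖Rg‖ = 1 := by
    have h1 : ⟪Rg, Rg⟫ = 1 := by rw [hRg, inner_symm_eq_dot, huu]
    have h2 := real_inner_self_eq_norm_sq Rg
    nlinarith [norm_nonneg Rg]
  have hgRg : g ≠ Rg := by
    intro h
    apply hune
    have := congrArg (WithLp.equiv 2 (Fin 3 → ℝ)) h
    simpa [hRg, hv] using this.symm
  have hinnerlt : ⟪g, Rg⟫ < 1 := (inner_lt_one_iff_real_of_norm_eq_one hg hRgnorm).mpr hgRg
  refine ⟨hinnerlt, ?_⟩
  have hsq : ‖r • Rg + c • g‖ ^ 2 < (r + c) ^ 2 := by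
    have hexpand := norm_add_sq_real (r • Rg) (c • g)
    have hin : ⟪r • Rg, c • g⟫ = r * c * ⟪g, Rg⟫ := by
      rw [real_inner_smul_left, real_inner_smul_right, real_inner_comm]
      ring
    have hnr : ‖r • Rg‖ = r := by
      rw [norm_smul, hRgnorm, Real.norm_eq_abs, abs_of_pos hr, mul_one]
    have hnc : ‖c • g‖ = c := by
      rw [norm_smul, hg, Real.norm_eq_abs, abs_of_pos hc, mul_one]
    rw [hin, hnr, hnc] at hexpand
    nlinarith [mul_pos hr hc]
  calc ‖r • Rg + c • g‖ = ‖r • Rg + c • g‖ := rfl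
  _ < r + c := lt_of_pow_lt_pow_left₀ 2 (by positivity) hsq
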